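/- Let L be a coherent lower prevision on a nonempty set X and let 𝒯 be a monoid of transformations of X. Then: (i) L is weakly 𝒯-invariant (L(f∘T) ≥ L(f) for all gambles f and T ∈ 𝒯) if and only if for every gamble f, every n ≥ 1, all T₁,…,T_n ∈ 𝒯 and all λ₁,…,λ_n ≥ 0 with Σ_{k=1}^n λ_k = 1, one has L(Σ_{k=1}^n λ_k (f∘T_k)) ≥ L(f); (ii) L is strongly 𝒯-invariant (L(f − f∘T) ≥ 0 and L(f∘T − f) ≥ 0 for all gambles f and T ∈ 𝒯) if and only if for every such convex combination one has L(Σ_{k=1}^n λ_k (f∘T_k) − f) ≥ 0 and L(f − Σ_{k=1}^n λ_k (f∘T_k)) ≥ 0. -/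

import Mathlib

def IsGamble {X : Type*} (f : X → ℝ) : Prop :=
  BddAbove (Set.range f) ∧ BddBelow (Set.range f)

lemma gamble_iff {X : Type*} (f : X → ℝ) : IsGamble f ↔ ∃ M, ∀ x, |f x| ≤ M := by
  constructor
  · rintro ⟨⟨a, ha⟩, ⟨b, hb⟩⟩
    refine ⟨max a (-b), fun x => ?_⟩
    have h1 : f x ≤ a := ha ⟨x, rfl⟩
    have h2 : b ≤ f x := hb ⟨x, rfl⟩
    have := le_max_left a (-b); have := le_max_right a (-b)
    rw [abs_le]; constructor <;> linarith
  · rintro ⟨M, hM⟩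
    exact ⟨⟨M, by rintro y ⟨x, rfl⟩; exact (abs_le.1 (hM x)).2⟩,
           ⟨-M, by rintro y ⟨x, rfl⟩; exact (abs_le.1 (hM x)).1⟩⟩

lemma gamble_comp {X : Type*} {f : X → ℝ} (hf : IsGamble f) (T : X → X) :
    IsGamble (f ∘ T) := by
  rw [gamble_iff] at *; obtain ⟨M, hM⟩ := hf; exact ⟨M, fun x => hM (T x)⟩

lemma gamble_zero {X : Type*} : IsGamble (0 : X → ℝ) := by
  rw [gamble_iff]; exact ⟨0, by simp⟩

lemma gamble_add {X : Type*} {f g : X → ℝ} (hf : IsGamble f) (hg : IsGamble g) :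
    IsGamble (f + g) := by
  rw [gamble_iff] at *
  obtain ⟨M, hM⟩ := hf; obtain ⟨N, hN⟩ := hg
  exact ⟨M + N, fun x => (abs_add_le _ _).trans (add_le_add (hM x) (hN x))⟩

lemma gamble_neg {X : Type*} {f : X → ℝ} (hf : IsGamble f) : IsGamble (-f) := by
  rw [gamble_iff] at *; obtain ⟨M, hM⟩ := hf; exact ⟨M, by simpa using hM⟩

lemma gamble_sub {X : Type*} {f g : X → ℝ} (hf : IsGamble f) (hg : IsGamble g) :
    IsGamble (f - g) := by
  rw [sub_eq_add_neg]; exact gamble_add hf (gamble_neg hg)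

lemma gamble_smul {X : Type*} {f : X → ℝ} (hf : IsGamble f) (c : ℝ) :
    IsGamble (c • f) := by
  rw [gamble_iff] at *
  obtain ⟨M, hM⟩ := hf
  refine ⟨|c| * max M 0, fun x => ?_⟩
  simp only [Pi.smul_apply, smul_eq_mul, abs_mul]
  exact mul_le_mul_of_nonneg_left ((hM x).trans (le_max_left M 0)) (abs_nonneg c)

lemma gamble_sum {X ι : Type*} (s : Finset ι) (g : ι → X → ℝ)
    (h : ∀ i ∈ s, IsGamble (g i)) : IsGamble (∑ i ∈ s, g i) :=
  Finset.sum_induction g IsGamble (fun _ _ => gamble_add) gamble_zero h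

def IsCoherentLowerPrevision {X : Type*} (L : (X → ℝ) → ℝ) : Prop :=
  (∀ f : X → ℝ, IsGamble f → sInf (Set.range f) ≤ L f) ∧
  (∀ f g : X → ℝ, IsGamble f → IsGamble g → L f + L g ≤ L (f + g)) ∧
  (∀ f : X → ℝ, IsGamble f → ∀ c : ℝ, 0 ≤ c → L (c • f) = c * L f)

lemma L_zero {X : Type*} {L : (X → ℝ) → ℝ} (hL : IsCoherentLowerPrevision L) :
    L 0 = 0 := by
  have := hL.2.2 0 gamble_zero 0 le_rfl
  simpa using this

lemma L_sum {X ι : Type*} [Nonempty X] {L : (X → ℝ) → ℝ}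
    (hL : IsCoherentLowerPrevision L) (s : Finset ι) (g : ι → X → ℝ)
    (h : ∀ i ∈ s, IsGamble (g i)) : ∑ i ∈ s, L (g i) ≤ L (∑ i ∈ s, g i) := by
  induction s using Finset.cons_induction with
  | empty => simp [L_zero hL]
  | cons a s ha ih =>
    rw [Finset.sum_cons, Finset.sum_cons]
    have h1 := ih (fun i hi => h i (Finset.mem_cons_of_mem hi))
    have h2 := hL.2.1 (g a) (∑ i ∈ s, g i) (h a (Finset.mem_cons_self a s))
      (gamble_sum s g (fun i hi => h i (Finset.mem_cons_of_mem hi)))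
    linarith

example : True := trivial

def IsCoherentPrevision {X : Type*} (P : (X → ℝ) → ℝ) : Prop :=
  (∀ f g : X → ℝ, IsGamble f → IsGamble g → P (f + g) = P f + P g) ∧
  (∀ f : X → ℝ, IsGamble f → sInf (Set.range f) ≤ P f)

def IsTransformationMonoid {X : Type*} (𝒯 : Set (X → X)) : Prop :=
  id ∈ 𝒯 ∧ ∀ S ∈ 𝒯, ∀ T ∈ 𝒯, S ∘ T ∈ 𝒯

def Dominating {X : Type*} (L : (X → ℝ) → ℝ) : Set ((X → ℝ) → ℝ) :=
  {P | IsCoherentPrevision P ∧ ∀ f : X → ℝ, IsGamble f → L f ≤ P f}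

theorem stmt9 (X : Type*) [Nonempty X] (𝒯 : Set (X → X))
    (h𝒯 : IsTransformationMonoid 𝒯)
    (L : (X → ℝ) → ℝ) (hL : IsCoherentLowerPrevision L) :
    ((∀ f : X → ℝ, IsGamble f → ∀ T ∈ 𝒯, L f ≤ L (f ∘ T)) ↔
      (∀ f : X → ℝ, IsGamble f →
        ∀ (n : ℕ) (Ts : Fin n → X → X) (lam : Fin n → ℝ),
          (∀ k, Ts k ∈ 𝒯) → (∀ k, 0 ≤ lam k) → (∑ k, lam k = 1) →
          L f ≤ L (fun x => ∑ k, lam k * f (Ts k x)))) ∧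
    ((∀ f : X → ℝ, IsGamble f → ∀ T ∈ 𝒯,
        0 ≤ L (f - f ∘ T) ∧ 0 ≤ L (f ∘ T - f)) ↔
      (∀ f : X → ℝ, IsGamble f →
        ∀ (n : ℕ) (Ts : Fin n → X → X) (lam : Fin n → ℝ),
          (∀ k, Ts k ∈ 𝒯) → (∀ k, 0 ≤ lam k) → (∑ k, lam k = 1) →
          0 ≤ L ((fun x => ∑ k, lam k * f (Ts k x)) - f) ∧
          0 ≤ L (f - fun x => ∑ k, lam k * f (Ts k x)))) := by
  constructor
  · constructor
    · intro h f hf n Ts lam hT hlam hsum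
      have key : (fun x => ∑ k, lam k * f (Ts k x)) = ∑ k, lam k • (f ∘ Ts k) := by
        funext x; simp [Finset.sum_apply]
      rw [key]
      calc L f = ∑ k, lam k * L f := by rw [← Finset.sum_mul, hsum, one_mul]
        _ ≤ ∑ k, lam k * L (f ∘ Ts k) := Finset.sum_le_sum fun k _ =>
            mul_le_mul_of_nonneg_left (h f hf (Ts k) (hT k)) (hlam k)
        _ = ∑ k, L (lam k • (f ∘ Ts k)) := Finset.sum_congr rfl fun k _ =>
            (hL.2.2 (f ∘ Ts k) (gamble_comp hf _) (lam k) (hlam k)).symm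
        _ ≤ L (∑ k, lam k • (f ∘ Ts k)) := L_sum hL _ _ fun k _ =>
            gamble_smul (gamble_comp hf _) _
    · intro h f hf T hT
      have := h f hf 1 (fun _ => T) (fun _ => 1) (fun _ => hT)
        (fun _ => zero_le_one) (by simp)
      simpa [Function.comp_def] using this
  · constructor
    · intro h f hf n Ts lam hT hlam hsum
      have key1 : ((fun x => ∑ k, lam k * f (Ts k x)) - f)
          = ∑ k, lam k • ((f ∘ Ts k) - f) := by
        funext x
        simp [Finset.sum_apply, mul_sub, Finset.sum_sub_distrib, ← Finset.sum_mul, hsum]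
      have key2 : (f - fun x => ∑ k, lam k * f (Ts k x))
          = ∑ k, lam k • (f - (f ∘ Ts k)) := by
        funext x
        simp [Finset.sum_apply, mul_sub, Finset.sum_sub_distrib, ← Finset.sum_mul, hsum]
      constructor
      · rw [key1]
        calc (0:ℝ) = ∑ k : Fin n, (0:ℝ) := by simp
          _ ≤ ∑ k, L (lam k • ((f ∘ Ts k) - f)) := Finset.sum_le_sum fun k _ => by
              rw [hL.2.2 _ (gamble_sub (gamble_comp hf _) hf) (lam k) (hlam k)]
              exact mul_nonneg (hlam k) (h f hf (Ts k) (hT k)).2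
          _ ≤ L (∑ k, lam k • ((f ∘ Ts k) - f)) := L_sum hL _ _ fun k _ =>
              gamble_smul (gamble_sub (gamble_comp hf _) hf) _
      · rw [key2]
        calc (0:ℝ) = ∑ k : Fin n, (0:ℝ) := by simp
          _ ≤ ∑ k, L (lam k • (f - (f ∘ Ts k))) := Finset.sum_le_sum fun k _ => by
              rw [hL.2.2 _ (gamble_sub hf (gamble_comp hf _)) (lam k) (hlam k)]
              exact mul_nonneg (hlam k) (h f hf (Ts k) (hT k)).1
          _ ≤ L (∑ k, lam k • (f - (f ∘ Ts k))) := L_sum hL _ _ fun k _ =>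
              gamble_smul (gamble_sub hf (gamble_comp hf _)) _
    · intro h f hf T hT
      have := h f hf 1 (fun _ => T) (fun _ => 1) (fun _ => hT)
        (fun _ => zero_le_one) (by simp)
      constructor
      · simpa [Function.comp_def] using this.2
      · simpa [Function.comp_def] using this.1
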